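/- Let su(2,1) be the real Lie algebra of complex 3×3 trace-free matrices A satisfying Aᴴη + ηA = 0, where η = diag(1,1,−1), with ℝ-basis Z' = (1/√3)·i(E₁₁ + E₃₃ − 2E₂₂), X = i(E₁₁ − E₃₃), W = i(E₁₃ − E₃₁), Y = E₁₃ + E₃₁, U = E₁₂ − E₂₁, V = i(E₁₂ + E₂₁), S = E₂₃ + E₃₂, T = i(E₂₃ − E₃₂). Let J₂, J₃ be the ℝ-linear maps defined on this basis by J₃: Z' ↦ X, X ↦ −Z', Y ↦ W, W ↦ −Y, U ↦ V, V ↦ −U, S ↦ T, T ↦ −S and J₂: Z' ↦ W, W ↦ Z', X ↦ Y, Y ↦ X, U ↦ T, T ↦ U, V ↦ S, S ↦ V, with J₁ := J₃J₂. Then the biinvariant scalar product B(A,C) := ½·Re(tr(AC)) (which is proportional to the Killing form of su(2,1)) is hyper-parahermitian with respect to this structure: B(J₁A, J₁C) = B(J₂A, J₂C) = −B(A,C) and B(J₃A, J₃C) = B(A,C) for all A, C ∈ su(2,1). -/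

import Mathlib

open Matrix

/-- `E j k`: the complex 3×3 matrix with 1 in row `j`, column `k`, and 0 elsewhere
(indices `0,1,2` corresponding to `1,2,3`). -/
noncomputable def Em (j k : Fin 3) : Matrix (Fin 3) (Fin 3) ℂ := Matrix.single j k 1

/-- `η = diag(1,1,−1)`. -/
noncomputable def eta : Matrix (Fin 3) (Fin 3) ℂ := Matrix.diagonal ![1, 1, -1]

/-- `Z' = (1/√3)·i(E₁₁ + E₃₃ − 2E₂₂)`. -/
noncomputable def Zm' : Matrix (Fin 3) (Fin 3) ℂ :=
  (Real.sqrt 3)⁻¹ • (Complex.I • (Em 0 0 + Em 2 2 - 2 • Em 1 1))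
noncomputable def Xm : Matrix (Fin 3) (Fin 3) ℂ := Complex.I • (Em 0 0 - Em 2 2)
noncomputable def Wm : Matrix (Fin 3) (Fin 3) ℂ := Complex.I • (Em 0 2 - Em 2 0)
noncomputable def Ym : Matrix (Fin 3) (Fin 3) ℂ := Em 0 2 + Em 2 0
noncomputable def Um : Matrix (Fin 3) (Fin 3) ℂ := Em 0 1 - Em 1 0
noncomputable def Vm : Matrix (Fin 3) (Fin 3) ℂ := Complex.I • (Em 0 1 + Em 1 0)
noncomputable def Sm : Matrix (Fin 3) (Fin 3) ℂ := Em 1 2 + Em 2 1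
noncomputable def Tm : Matrix (Fin 3) (Fin 3) ℂ := Complex.I • (Em 1 2 - Em 2 1)

/-- The biinvariant scalar product `B(A,C) = ½·Re(tr(AC))` on `su(2,1)`, proportional to
the Killing form. -/
noncomputable def Bform (A C : Matrix (Fin 3) (Fin 3) ℂ) : ℝ :=
  (1 / 2 : ℝ) * ((A * C).trace).re

noncomputable def Lc (z x w y u v s t : ℝ) : Matrix (Fin 3) (Fin 3) ℂ :=
  z • Zm' + x • Xm + w • Wm + y • Ym + u • Um + v • Vm + s • Sm + t • Tm

lemma Lc_eq (z x w y u v s t : ℝ) :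
    Lc z x w y u v s t =
      !![((z:ℂ) * ((Real.sqrt 3 : ℝ):ℂ)⁻¹ + x) * Complex.I, (u:ℂ) + v * Complex.I,
           (y:ℂ) + w * Complex.I;
         -(u:ℂ) + v * Complex.I, -2 * z * ((Real.sqrt 3 : ℝ):ℂ)⁻¹ * Complex.I,
           (s:ℂ) + t * Complex.I;
         (y:ℂ) - w * Complex.I, (s:ℂ) - t * Complex.I,
           ((z:ℂ) * ((Real.sqrt 3 : ℝ):ℂ)⁻¹ - x) * Complex.I] := by
  ext i j
  fin_cases i <;> fin_cases j <;>
    simp [Lc, Zm', Xm, Wm, Ym, Um, Vm, Sm, Tm, Em, Matrix.single,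
      Matrix.smul_apply, Complex.real_smul, Complex.ofReal_inv] <;> ring

lemma Bform_Lc (z x w y u v s t z' x' w' y' u' v' s' t' : ℝ) :
    Bform (Lc z x w y u v s t) (Lc z' x' w' y' u' v' s' t') =
      -(z*z' + x*x' + u*u' + v*v') + (w*w' + y*y' + s*s' + t*t') := by
  have h3 : (Real.sqrt 3) * (Real.sqrt 3) = 3 := Real.mul_self_sqrt (by norm_num)
  have h3' : (Real.sqrt 3) ≠ 0 := by positivity
  rw [Lc_eq, Lc_eq]
  simp only [Bform, Matrix.trace, Matrix.diag, Fin.sum_univ_three, Matrix.mul_apply, Matrix.of_apply,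
    Matrix.cons_val', Matrix.cons_val_zero, Matrix.cons_val_one, Matrix.head_cons,
    Matrix.empty_val', Matrix.cons_val_fin_one, Matrix.head_fin_const,
    Matrix.cons_val_two, Matrix.tail_cons]
  simp only [Complex.add_re, Complex.mul_re, Complex.mul_im, Complex.I_re, Complex.I_im,
    Complex.ofReal_re, Complex.ofReal_im, Complex.add_im, Complex.sub_re, Complex.sub_im,
    Complex.neg_re, Complex.neg_im, Complex.inv_re, Complex.inv_im, Complex.normSq_ofReal,
    Complex.ofReal_mul, Complex.ofReal_neg, Complex.ofReal_ofNat,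
    Complex.re_ofNat, Complex.im_ofNat]
  field_simp
  ring_nf
  rw [Real.sq_sqrt (by norm_num : (0:ℝ) ≤ 3)]
  linear_combination (2 * z * z' * (Real.sqrt 3 * Real.sqrt 3 + 3)) * h3

set_option maxHeartbeats 1000000 in
lemma decomp (A : Matrix (Fin 3) (Fin 3) ℂ) (htr : A.trace = 0)
    (hA : Aᴴ * eta + eta * A = 0) :
    A = Lc (-(Real.sqrt 3/2) * (A 1 1).im) ((A 0 0).im + (A 1 1).im/2)
          ((A 0 2).im) ((A 0 2).re) ((A 0 1).re) ((A 0 1).im)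
          ((A 1 2).re) ((A 1 2).im) := by
  have hsq : Real.sqrt 3 * (Real.sqrt 3)⁻¹ = 1 := mul_inv_cancel₀ (by positivity)
  have key : ∀ j k, (starRingEnd ℂ) (A k j) * (![1,1,-1] k : ℂ) + (![1,1,-1] j : ℂ) * A j k = 0 := by
    intro j k
    have := congrFun (congrFun hA j) k
    simpa [eta, Matrix.add_apply, Matrix.mul_diagonal, Matrix.diagonal_mul,
      Matrix.conjTranspose_apply] using this
  have k00 := key 0 0; have k11 := key 1 1; have k22 := key 2 2
  have k01 := key 1 0; have k02 := key 2 0; have k12 := key 2 1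
  simp only [Matrix.cons_val_zero, Matrix.cons_val_one, Matrix.head_cons,
    Matrix.cons_val_two, Matrix.tail_cons, mul_one, one_mul, mul_neg, neg_mul,
    Complex.ext_iff, Complex.add_re, Complex.add_im, Complex.conj_re, Complex.conj_im,
    Complex.neg_re, Complex.neg_im, Complex.zero_re, Complex.zero_im] at k00 k11 k22 k01 k02 k12
  rw [Matrix.trace_fin_three] at htr
  rw [Complex.ext_iff] at htr
  simp only [Complex.add_re, Complex.add_im, Complex.zero_re, Complex.zero_im] at htr
  have hz1 : (-(Real.sqrt 3/2) * (A 1 1).im) * (Real.sqrt 3)⁻¹ = -(A 1 1).im/2 := by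
    field_simp
  have hz2 : Real.sqrt 3 * (Real.sqrt 3)⁻¹ * (A 1 1).im = (A 1 1).im := by
    rw [hsq]; ring
  have h3 : Real.sqrt 3 * Real.sqrt 3 = 3 := Real.mul_self_sqrt (by norm_num)
  have hz3 : Real.sqrt 3 / 2 * (A 1 1).im * (Real.sqrt 3 / 3) = (A 1 1).im / 2 := by
    linear_combination ((A 1 1).im / 6) * h3
  have hz4 : 2 * (Real.sqrt 3 / 2 * (A 1 1).im) * (Real.sqrt 3 / 3) = (A 1 1).im := by
    linear_combination ((A 1 1).im / 3) * h3
  rw [Lc_eq]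
  ext i j
  fin_cases i <;> fin_cases j <;>
  · apply Complex.ext <;>
    simp [Complex.ext_iff, Complex.add_re, Complex.add_im, Complex.sub_re, Complex.sub_im,
      Complex.mul_re, Complex.mul_im, Complex.I_re, Complex.I_im, Complex.ofReal_re,
      Complex.ofReal_im, Complex.neg_re, Complex.neg_im] <;>
    linarith [hz1, hz2, hz3, hz4, k00.1, k00.2, k11.1, k11.2, k22.1, k22.2, k01.1, k01.2,
        k02.1, k02.2, k12.1, k12.2, htr.1, htr.2]

lemma J2_Lc (J2 : Matrix (Fin 3) (Fin 3) ℂ →ₗ[ℝ] Matrix (Fin 3) (Fin 3) ℂ)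
    (hJ2Z : J2 Zm' = Wm) (hJ2W : J2 Wm = Zm') (hJ2X : J2 Xm = Ym) (hJ2Y : J2 Ym = Xm)
    (hJ2U : J2 Um = Tm) (hJ2T : J2 Tm = Um) (hJ2V : J2 Vm = Sm) (hJ2S : J2 Sm = Vm)
    (z x w y u v s t : ℝ) :
    J2 (Lc z x w y u v s t) = Lc w y z x t s v u := by
  simp only [Lc, map_add, _root_.map_smul, hJ2Z, hJ2X, hJ2W, hJ2Y, hJ2U, hJ2V, hJ2S, hJ2T]
  module

lemma J3_Lc (J3 : Matrix (Fin 3) (Fin 3) ℂ →ₗ[ℝ] Matrix (Fin 3) (Fin 3) ℂ)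
    (hJ3Z : J3 Zm' = Xm) (hJ3X : J3 Xm = -Zm') (hJ3Y : J3 Ym = Wm) (hJ3W : J3 Wm = -Ym)
    (hJ3U : J3 Um = Vm) (hJ3V : J3 Vm = -Um) (hJ3S : J3 Sm = Tm) (hJ3T : J3 Tm = -Sm)
    (z x w y u v s t : ℝ) :
    J3 (Lc z x w y u v s t) = Lc (-x) z y (-w) (-v) u (-t) s := by
  simp only [Lc, map_add, _root_.map_smul, hJ3Z, hJ3X, hJ3W, hJ3Y, hJ3U, hJ3V, hJ3S, hJ3T]
  module

/-- On `su(2,1)` (trace-free `A` with `Aᴴη + ηA = 0`, `η = diag(1,1,−1)`) with the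
hyper-paracomplex structure defined on the normalized basis
`Z', X, W, Y, U, V, S, T` by `J₃: Z' ↦ X, X ↦ −Z', Y ↦ W, W ↦ −Y, U ↦ V, V ↦ −U, S ↦ T,
T ↦ −S`, `J₂: Z' ↦ W, W ↦ Z', X ↦ Y, Y ↦ X, U ↦ T, T ↦ U, V ↦ S, S ↦ V`, `J₁ := J₃J₂`,
the biinvariant scalar product `B(A,C) = ½·Re(tr(AC))` is hyper-parahermitian:
`B(J₁A,J₁C) = B(J₂A,J₂C) = −B(A,C)` and `B(J₃A,J₃C) = B(A,C)` for all
`A, C ∈ su(2,1)`. -/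
theorem stmt_19
    (J2 J3 : Matrix (Fin 3) (Fin 3) ℂ →ₗ[ℝ] Matrix (Fin 3) (Fin 3) ℂ)
    (hJ3Z : J3 Zm' = Xm) (hJ3X : J3 Xm = -Zm') (hJ3Y : J3 Ym = Wm) (hJ3W : J3 Wm = -Ym)
    (hJ3U : J3 Um = Vm) (hJ3V : J3 Vm = -Um) (hJ3S : J3 Sm = Tm) (hJ3T : J3 Tm = -Sm)
    (hJ2Z : J2 Zm' = Wm) (hJ2W : J2 Wm = Zm') (hJ2X : J2 Xm = Ym) (hJ2Y : J2 Ym = Xm)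
    (hJ2U : J2 Um = Tm) (hJ2T : J2 Tm = Um) (hJ2V : J2 Vm = Sm) (hJ2S : J2 Sm = Vm) :
    ∀ A C : Matrix (Fin 3) (Fin 3) ℂ,
      A.trace = 0 → Aᴴ * eta + eta * A = 0 →
      C.trace = 0 → Cᴴ * eta + eta * C = 0 →
        Bform (J3 (J2 A)) (J3 (J2 C)) = -Bform A C
        ∧ Bform (J2 A) (J2 C) = -Bform A C
        ∧ Bform (J3 A) (J3 C) = Bform A C := by
  intro A C htrA hcA htrC hcC
  obtain ⟨z, x, w, y, u, v, s, t, hA⟩ :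
      ∃ z x w y u v s t : ℝ, A = Lc z x w y u v s t :=
    ⟨_, _, _, _, _, _, _, _, decomp A htrA hcA⟩
  obtain ⟨z', x', w', y', u', v', s', t', hC⟩ :
      ∃ z x w y u v s t : ℝ, C = Lc z x w y u v s t :=
    ⟨_, _, _, _, _, _, _, _, decomp C htrC hcC⟩
  subst hA hC
  rw [J2_Lc J2 hJ2Z hJ2W hJ2X hJ2Y hJ2U hJ2T hJ2V hJ2S,
      J2_Lc J2 hJ2Z hJ2W hJ2X hJ2Y hJ2U hJ2T hJ2V hJ2S,
      J3_Lc J3 hJ3Z hJ3X hJ3Y hJ3W hJ3U hJ3V hJ3S hJ3T,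
      J3_Lc J3 hJ3Z hJ3X hJ3Y hJ3W hJ3U hJ3V hJ3S hJ3T,
      J3_Lc J3 hJ3Z hJ3X hJ3Y hJ3W hJ3U hJ3V hJ3S hJ3T,
      J3_Lc J3 hJ3Z hJ3X hJ3Y hJ3W hJ3U hJ3V hJ3S hJ3T]
  refine ⟨?_, ?_, ?_⟩ <;> rw [Bform_Lc, Bform_Lc] <;> ring
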